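/- arXiv:2508.21318 — 2 statements merged into one kernel-verified Lean document; each statement's English description precedes it below -/
import Mathlib

section
/- For every positive integer N, the polynomial identity ∑_{j=1}^{N+1} (j-1)! · S(N+2-j, j) · z^{N+1-j} = ∑_{j=1}^{N-1} j! · S(N-j, j) · z^{N-j} + ∑_{j=1}^{N} j! · S(N+1-j, j) · z^{N+1-j} holds, where S(n,m) denotes the Stirling numbers of the second kind. -/
/-- Stirling numbers of the second kind. -/
def stirling2 : ℕ → ℕ → ℕ
  | 0, 0 => 1
  | 0, _ + 1 => 0
  | _ + 1, 0 => 0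
  | n + 1, m + 1 => (m + 1) * stirling2 n (m + 1) + stirling2 n m

lemma stirling2_succ (n m : ℕ) :
    stirling2 (n + 1) (m + 1) = (m + 1) * stirling2 n (m + 1) + stirling2 n m := rfl

lemma stirling2_zero_succ (m : ℕ) : stirling2 0 (m + 1) = 0 := rfl

lemma stirling2_succ_zero (n : ℕ) : stirling2 (n + 1) 0 = 0 := rfl

lemma sum_Icc_one {P : Type*} [AddCommMonoid P] (n : ℕ) (f : ℕ → P) :
    ∑ j ∈ Finset.Icc 1 n, f j = ∑ i ∈ Finset.range n, f (i + 1) := by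
  induction n with
  | zero => simp
  | succ n ih => rw [Finset.sum_Icc_succ_top (by omega), ih, Finset.sum_range_succ]

theorem stmt0 (N : ℕ) (hN : 1 ≤ N) :
    ∑ j ∈ Finset.Icc 1 (N + 1),
        (Polynomial.C ((Nat.factorial (j - 1) * stirling2 (N + 2 - j) j : ℕ) : ℤ)) *
          Polynomial.X ^ (N + 1 - j) =
      (∑ j ∈ Finset.Icc 1 (N - 1),
          (Polynomial.C ((Nat.factorial j * stirling2 (N - j) j : ℕ) : ℤ)) *
            Polynomial.X ^ (N - j)) +
        ∑ j ∈ Finset.Icc 1 N,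
          (Polynomial.C ((Nat.factorial j * stirling2 (N + 1 - j) j : ℕ) : ℤ)) *
            Polynomial.X ^ (N + 1 - j) := by
  obtain ⟨M, rfl⟩ : ∃ M, N = M + 1 := ⟨N - 1, by omega⟩
  set N := M + 1 with hNdef
  -- Convert all three sums to range sums
  have hL : ∑ j ∈ Finset.Icc 1 (N + 1),
      (Polynomial.C ((Nat.factorial (j - 1) * stirling2 (N + 2 - j) j : ℕ) : ℤ)) *
        Polynomial.X ^ (N + 1 - j)
      = ∑ i ∈ Finset.range (N + 1),
      (Polynomial.C ((Nat.factorial i * stirling2 (N + 1 - i) (i + 1) : ℕ) : ℤ)) *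
        Polynomial.X ^ (N - i) := by
    rw [sum_Icc_one]
    apply Finset.sum_congr rfl
    intro i hi
    have h1 : i + 1 - 1 = i := by omega
    have h2 : N + 2 - (i + 1) = N + 1 - i := by omega
    have h3 : N + 1 - (i + 1) = N - i := by omega
    rw [h1, h2, h3]
  have hR2 : ∑ j ∈ Finset.Icc 1 N,
      (Polynomial.C ((Nat.factorial j * stirling2 (N + 1 - j) j : ℕ) : ℤ)) *
        Polynomial.X ^ (N + 1 - j)
      = ∑ i ∈ Finset.range N,
      (Polynomial.C ((Nat.factorial (i + 1) * stirling2 (N - i) (i + 1) : ℕ) : ℤ)) *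
        Polynomial.X ^ (N - i) := by
    rw [sum_Icc_one]
    apply Finset.sum_congr rfl
    intro i hi
    have h2 : N + 1 - (i + 1) = N - i := by omega
    rw [h2]
  have hR1 : ∑ j ∈ Finset.Icc 1 (N - 1),
      (Polynomial.C ((Nat.factorial j * stirling2 (N - j) j : ℕ) : ℤ)) *
        Polynomial.X ^ (N - j)
      = ∑ i ∈ Finset.range M,
      (Polynomial.C ((Nat.factorial (i + 1) * stirling2 (N - (i + 1)) (i + 1) : ℕ) : ℤ)) *
        Polynomial.X ^ (N - (i + 1)) := by
    rw [sum_Icc_one]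
    apply Finset.sum_congr (by norm_num [hNdef]) (fun i hi => rfl)
  rw [hL, hR1, hR2]
  -- split each LHS term using the recurrence
  have hsplit : ∀ i ∈ Finset.range (N + 1),
      (Polynomial.C ((Nat.factorial i * stirling2 (N + 1 - i) (i + 1) : ℕ) : ℤ)) *
        Polynomial.X ^ (N - i)
      = (Polynomial.C ((Nat.factorial i * stirling2 (N - i) i : ℕ) : ℤ)) *
          Polynomial.X ^ (N - i)
        + (Polynomial.C ((Nat.factorial (i + 1) * stirling2 (N - i) (i + 1) : ℕ) : ℤ)) *
          Polynomial.X ^ (N - i) := by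
    intro i hi
    rw [Finset.mem_range] at hi
    have hNi : N + 1 - i = (N - i) + 1 := by omega
    rw [hNi, stirling2_succ]
    have : (Nat.factorial i * ((i + 1) * stirling2 (N - i) (i + 1) + stirling2 (N - i) i) : ℕ)
        = Nat.factorial (i + 1) * stirling2 (N - i) (i + 1) + Nat.factorial i * stirling2 (N - i) i := by
      rw [Nat.factorial_succ]; ring
    rw [this]
    push_cast
    rw [Polynomial.C_add]
    ring
  rw [Finset.sum_congr rfl hsplit, Finset.sum_add_distrib]
  congr 1
  · -- second component: ∑ range (N+1) C(i! S(N-i,i)) X^(N-i) = ∑ range M ...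
    rw [Finset.sum_range_succ']
    have h0 : stirling2 (N - 0) 0 = 0 := stirling2_succ_zero M
    rw [h0]
    simp only [Nat.mul_zero, Nat.cast_zero, Polynomial.C_0, zero_mul, add_zero]
    -- now ∑ i in range N, f (i+1); peel last term i = M
    rw [show N = M + 1 from rfl, Finset.sum_range_succ]
    have hlast : stirling2 (M + 1 - (M + 1)) (M + 1) = 0 := by
      simp [stirling2_zero_succ]
    rw [hlast]
    simp
  · -- first component: drop last term i = N
    rw [Finset.sum_range_succ]
    have hlast : stirling2 (N - N) (N + 1) = 0 := by
      simp [stirling2_zero_succ]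
    rw [hlast]
    simp
end

section
/- For every n ≥ 1, the map appending a repeated last entry gives a bijection from the set of inversion sequences e of length n avoiding the pattern (-,-,=) with e_{n-1} ≠ e_n (when n ≥ 2; for n = 1 the condition is vacuous), onto the set of inversion sequences ẽ of length n+1 avoiding (-,-,=) with ẽ_n = ẽ_{n+1}. Moreover this bijection preserves the number of distinct entries. -/
/-- `e` is an inversion sequence: `0 ≤ e_i < i` (0-indexed: `e i ≤ i`). -/
def IsInvSeq {n : ℕ} (e : Fin n → ℕ) : Prop := ∀ i : Fin n, e i ≤ i.1

/-- `e` avoids the pattern (-,-,=): no `i < j < k` with `e i = e k`. -/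
def AvoidsEq {n : ℕ} (e : Fin n → ℕ) : Prop :=
  ¬ ∃ i j k : Fin n, i < j ∧ j < k ∧ e i = e k

/-- The map appending a repeated copy of the last entry. -/
def extendLast (n : ℕ) (hn : 0 < n) (e : Fin n → ℕ) : Fin (n + 1) → ℕ :=
  fun i => if h : i.1 < n then e ⟨i.1, h⟩ else e ⟨n - 1, by omega⟩

lemma extendLast_lt (n : ℕ) (hn : 0 < n) (e : Fin n → ℕ) (i : ℕ) (h : i < n)
    (h' : i < n + 1) : extendLast n hn e ⟨i, h'⟩ = e ⟨i, h⟩ := by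
  simp [extendLast, h]

lemma extendLast_last (n : ℕ) (hn : 0 < n) (e : Fin n → ℕ) :
    extendLast n hn e ⟨n, Nat.lt_succ_self n⟩ = e ⟨n - 1, Nat.sub_lt hn Nat.one_pos⟩ := by
  simp [extendLast]

lemma image_extendLast (n : ℕ) (hn : 0 < n) (e : Fin n → ℕ) :
    Finset.image (extendLast n hn e) Finset.univ = Finset.image e Finset.univ := by
  ext v
  simp only [Finset.mem_image, Finset.mem_univ, true_and]
  constructor
  · rintro ⟨i, rfl⟩
    by_cases h : i.1 < n
    · exact ⟨⟨i.1, h⟩, (extendLast_lt n hn e i.1 h i.2).symm⟩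
    · have hi : i.1 = n := by omega
      refine ⟨⟨n - 1, by omega⟩, ?_⟩
      simp [extendLast, h]
  · rintro ⟨i, rfl⟩
    exact ⟨⟨i.1, by omega⟩, extendLast_lt n hn e i.1 i.2 (by omega)⟩

/-- Appending a repeated last entry is a bijection from length-`n`
(-,-,=)-avoiding inversion sequences whose last two entries differ
(vacuous for `n = 1`) onto length-`n+1` (-,-,=)-avoiding inversion
sequences whose last two entries are equal, and it preserves the number
of distinct entries. -/
theorem stmt3 (n : ℕ) (hn : 0 < n) :
    Set.BijOn (extendLast n hn)
      {e : Fin n → ℕ | IsInvSeq e ∧ AvoidsEq e ∧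
        ∀ h : 2 ≤ n, e ⟨n - 2, by omega⟩ ≠ e ⟨n - 1, by omega⟩}
      {f : Fin (n + 1) → ℕ | IsInvSeq f ∧ AvoidsEq f ∧
        f ⟨n - 1, by omega⟩ = f ⟨n, by omega⟩} ∧
    ∀ e : Fin n → ℕ,
      e ∈ {e : Fin n → ℕ | IsInvSeq e ∧ AvoidsEq e ∧
        ∀ h : 2 ≤ n, e ⟨n - 2, by omega⟩ ≠ e ⟨n - 1, by omega⟩} →
      (Finset.image (extendLast n hn e) Finset.univ).card =
        (Finset.image e Finset.univ).card := by
  constructor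
  · refine ⟨?_, ?_, ?_⟩
    · -- MapsTo
      rintro e ⟨hinv, havd, hne⟩
      refine ⟨?_, ?_, ?_⟩
      · -- IsInvSeq
        intro i
        by_cases h : i.1 < n
        · have := hinv ⟨i.1, h⟩
          simpa [extendLast, h] using this
        · have hi : i.1 = n := by omega
          have := hinv ⟨n - 1, by omega⟩
          simp only [extendLast, h, dif_neg, not_false_iff]
          omega
      · -- AvoidsEq
        rintro ⟨i, j, k, hij, hjk, heq⟩
        have hi : i.1 < n := by
          have := hij.trans hjk
          have : i.1 < k.1 := this
          omega
        by_cases hk : k.1 < n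
        · apply havd
          have hj : j.1 < n := lt_trans hjk hk
          refine ⟨⟨i.1, hi⟩, ⟨j.1, hj⟩, ⟨k.1, hk⟩, hij, hjk, ?_⟩
          rw [← extendLast_lt n hn e i.1 hi i.2, ← extendLast_lt n hn e k.1 hk k.2]
          exact heq
        · -- k = n, value is e (n-1)
          have hkn : k.1 = n := by omega
          have hk' : k = ⟨n, by omega⟩ := Fin.ext hkn
          rw [hk', extendLast_last] at heq
          rw [extendLast_lt n hn e i.1 hi i.2] at heq
          have hj : j.1 < n := by have : j.1 < k.1 := hjk; omega
          -- e ⟨i⟩ = e ⟨n-1⟩ with i < j < n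
          by_cases hjn : j.1 < n - 1
          · exact havd ⟨⟨i.1, hi⟩, ⟨j.1, hj⟩, ⟨n - 1, by omega⟩, hij, hjn, heq⟩
          · -- j = n - 1, so i < n - 1
            have hin : i.1 < n - 1 := by have : i.1 < j.1 := hij; omega
            by_cases hin2 : i.1 < n - 2
            · refine havd ⟨⟨i.1, hi⟩, ⟨n - 2, by omega⟩, ⟨n - 1, by omega⟩, hin2, ?_, heq⟩
              show n - 2 < n - 1
              omega
            · have h2 : 2 ≤ n := by omega
              have : i.1 = n - 2 := by omega
              have hieq : (⟨i.1, hi⟩ : Fin n) = ⟨n - 2, by omega⟩ := Fin.ext this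
              rw [hieq] at heq
              exact hne h2 heq
      · -- last two equal
        have h1 : n - 1 < n := by omega
        rw [extendLast_last, extendLast_lt n hn e (n - 1) h1 (by omega)]
    · -- InjOn
      rintro e₁ - e₂ - heq
      funext i
      have := congrFun heq ⟨i.1, by omega⟩
      rwa [extendLast_lt n hn e₁ i.1 i.2 (by omega),
        extendLast_lt n hn e₂ i.1 i.2 (by omega)] at this
    · -- SurjOn
      rintro f ⟨hinv, havd, hlast⟩
      refine ⟨fun i => f ⟨i.1, by omega⟩, ⟨?_, ?_, ?_⟩, ?_⟩
      · intro i; exact hinv ⟨i.1, by omega⟩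
      · rintro ⟨i, j, k, hij, hjk, heq⟩
        exact havd ⟨⟨i.1, by omega⟩, ⟨j.1, by omega⟩, ⟨k.1, by omega⟩, hij, hjk, heq⟩
      · intro h2 heq
        apply havd
        refine ⟨⟨n - 2, by omega⟩, ⟨n - 1, by omega⟩, ⟨n, by omega⟩, ?_, ?_, ?_⟩
        · show n - 2 < n - 1; omega
        · show n - 1 < n; omega
        · exact heq.trans hlast
      · funext i
        by_cases h : i.1 < n
        · simp [extendLast, h]
        · have hil := i.2
          have hin : i.1 = n := by omega
          have hi : i = ⟨n, by omega⟩ := Fin.ext (by simp [hin])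
          rw [hi, extendLast_last]
          exact hlast
  · intro e _
    rw [image_extendLast]
end
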